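/- Let F : ℝ^d → ℝ be convex, differentiable, nonnegative and β-smooth, and let w_1, …, w_T be gradient descent iterates with w_1 = 0 and stepsize η ≤ 1/(2β). Then for every w ∈ ℝ^d, (1/T) Σ_{t=1}^T F(w_t) ≤ ‖w‖²/(ηT) + 2F(w). -/

import Mathlib

open RealInnerProductSpace

variable {d : ℕ}

-- directional derivative lemma
lemma dir_deriv {F : EuclideanSpace ℝ (Fin d) → ℝ} {g : EuclideanSpace ℝ (Fin d) → EuclideanSpace ℝ (Fin d)}
    (hgrad : ∀ w, HasGradientAt F (g w) w) (x h : EuclideanSpace ℝ (Fin d)) (s : ℝ) :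
    HasDerivAt (fun s : ℝ => F (x + s • h)) ⟪g (x + s • h), h⟫ s := by
  have hc : HasDerivAt (fun s : ℝ => x + s • h) h s := by
    simpa using ((hasDerivAt_id s).smul_const h).const_add x
  have := (hgrad (x + s • h)).hasFDerivAt.comp_hasDerivAt s hc
  simp [InnerProductSpace.toDual_apply_apply] at this
  exact this

-- convexity gradient inequality
lemma grad_ineq {F : EuclideanSpace ℝ (Fin d) → ℝ} {g : EuclideanSpace ℝ (Fin d) → EuclideanSpace ℝ (Fin d)}
    (hconv : ConvexOn ℝ Set.univ F) (hgrad : ∀ w, HasGradientAt F (g w) w)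
    (x y : EuclideanSpace ℝ (Fin d)) :
    F x + ⟪g x, y - x⟫ ≤ F y := by
  have hφ : ConvexOn ℝ Set.univ (fun s : ℝ => F (x + s • (y - x))) := by
    have := hconv.comp_affineMap (AffineMap.lineMap x y : ℝ →ᵃ[ℝ] EuclideanSpace ℝ (Fin d))
    simpa [Function.comp_def, AffineMap.lineMap_apply, add_comm] using this
  have hd : HasDerivAt (fun s : ℝ => F (x + s • (y - x))) ⟪g x, y - x⟫ 0 := by
    simpa using dir_deriv hgrad x (y - x) 0
  have := hφ.le_slope_of_hasDerivAt (Set.mem_univ (0:ℝ)) (Set.mem_univ (1:ℝ)) one_pos hd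
  simp [slope_def_field] at this
  simpa [add_comm] using add_le_add_left this (F x)

-- descent lemma
lemma descent {F : EuclideanSpace ℝ (Fin d) → ℝ} {g : EuclideanSpace ℝ (Fin d) → EuclideanSpace ℝ (Fin d)}
    {β : ℝ} (hβ : 0 < β)
    (hgrad : ∀ w, HasGradientAt F (g w) w)
    (hlip : ∀ u v, ‖g u - g v‖ ≤ β * ‖u - v‖)
    (x y : EuclideanSpace ℝ (Fin d)) :
    F y ≤ F x + ⟪g x, y - x⟫ + β / 2 * ‖y - x‖ ^ 2 := by
  set h := y - x with hh
  have hgc : Continuous g := by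
    refine LipschitzWith.continuous (K := β.toNNReal) ?_
    refine LipschitzWith.of_dist_le_mul fun u v => ?_
    simpa [dist_eq_norm, Real.coe_toNNReal _ hβ.le] using hlip u v
  have hcont : Continuous (fun s : ℝ => ⟪g (x + s • h), h⟫) := by
    exact (hgc.comp (by continuity)).inner continuous_const
  have hftc : ∫ s in (0:ℝ)..1, ⟪g (x + s • h), h⟫ = F (x + (1:ℝ) • h) - F (x + (0:ℝ) • h) := by
    refine intervalIntegral.integral_eq_sub_of_hasDerivAt (fun s _ => dir_deriv hgrad x h s) ?_
    exact hcont.intervalIntegrable 0 1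
  have hmono : ∫ s in (0:ℝ)..1, ⟪g (x + s • h), h⟫ ≤
      ∫ s in (0:ℝ)..1, (⟪g x, h⟫ + (β * ‖h‖ ^ 2) * s) := by
    refine intervalIntegral.integral_mono_on zero_le_one (hcont.intervalIntegrable 0 1)
      ((by continuity : Continuous fun s : ℝ => ⟪g x, h⟫ + (β * ‖h‖ ^ 2) * s).intervalIntegrable 0 1)
      (fun s hs => ?_)
    have h1 : ⟪g (x + s • h), h⟫ - ⟪g x, h⟫ = ⟪g (x + s • h) - g x, h⟫ := by
      rw [inner_sub_left]
    have h2 : ⟪g (x + s • h) - g x, h⟫ ≤ ‖g (x + s • h) - g x‖ * ‖h‖ :=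
      real_inner_le_norm _ _
    have h3 : ‖g (x + s • h) - g x‖ ≤ β * (s * ‖h‖) := by
      have := hlip (x + s • h) x
      simpa [norm_smul, abs_of_nonneg hs.1] using this
    nlinarith [norm_nonneg h, norm_nonneg (g (x + s • h) - g x), hs.1]
  have hint : ∫ s in (0:ℝ)..1, (⟪g x, h⟫ + (β * ‖h‖ ^ 2) * s) = ⟪g x, h⟫ + β * ‖h‖ ^ 2 / 2 := by
    rw [intervalIntegral.integral_add intervalIntegrable_const
      (((by continuity : Continuous fun s : ℝ => β * ‖h‖ ^ 2 * s).intervalIntegrable 0 1)),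
      intervalIntegral.integral_const_mul, integral_id]
    simp
    ring
  have : F y - F x ≤ ⟪g x, h⟫ + β * ‖h‖ ^ 2 / 2 := by
    have := hftc ▸ hmono
    simp only [one_smul, zero_smul, add_zero, hh] at this ⊢
    simp only [add_sub_cancel] at this
    linarith [hint ▸ this]
  linarith

lemma grad_sq_le {F : EuclideanSpace ℝ (Fin d) → ℝ} {g : EuclideanSpace ℝ (Fin d) → EuclideanSpace ℝ (Fin d)}
    {β : ℝ} (hβ : 0 < β)
    (hnonneg : ∀ w, 0 ≤ F w)
    (hgrad : ∀ w, HasGradientAt F (g w) w)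
    (hlip : ∀ u v, ‖g u - g v‖ ≤ β * ‖u - v‖)
    (x : EuclideanSpace ℝ (Fin d)) :
    ‖g x‖ ^ 2 ≤ 2 * β * F x := by
  have hd := descent hβ hgrad hlip x (x - (1 / β) • g x)
  have h1 : (x - (1 / β) • g x) - x = -((1 / β) • g x) := by abel
  rw [h1] at hd
  have h2 : ⟪g x, -((1 / β) • g x)⟫ = -(1 / β) * ‖g x‖ ^ 2 := by
    rw [inner_neg_right, real_inner_smul_right, real_inner_self_eq_norm_sq]; ring
  have h3 : ‖-((1 / β) • g x)‖ ^ 2 = (1 / β) ^ 2 * ‖g x‖ ^ 2 := by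
    rw [norm_neg, norm_smul, mul_pow, Real.norm_eq_abs,
      abs_of_nonneg (by positivity : (0:ℝ) ≤ 1 / β)]
  rw [h2, h3] at hd
  have h0 := hnonneg (x - (1 / β) • g x)
  have hβ' : β ≠ 0 := hβ.ne'
  have hcomb : -(1 / β) * ‖g x‖ ^ 2 + β / 2 * ((1 / β) ^ 2 * ‖g x‖ ^ 2)
      = -(‖g x‖ ^ 2 / (2 * β)) := by field_simp; ring
  have hle : ‖g x‖ ^ 2 / (2 * β) ≤ F x := by nlinarith
  rw [div_le_iff₀ (by positivity : (0:ℝ) < 2 * β)] at hle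
  linarith

theorem gd_average_regret {d : ℕ}
    (F : EuclideanSpace ℝ (Fin d) → ℝ)
    (g : EuclideanSpace ℝ (Fin d) → EuclideanSpace ℝ (Fin d))
    (β η : ℝ) (hβ : 0 < β) (hη : 0 < η) (hηβ : η ≤ 1 / (2 * β))
    (hconv : ConvexOn ℝ Set.univ F)
    (hnonneg : ∀ w, 0 ≤ F w)
    (hgrad : ∀ w, HasGradientAt F (g w) w)
    (hlip : ∀ u v, ‖g u - g v‖ ≤ β * ‖u - v‖)
    (w : ℕ → EuclideanSpace ℝ (Fin d))
    (hw1 : w 1 = 0)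
    (hupd : ∀ t, 1 ≤ t → w (t + 1) = w t - η • g (w t)) :
    ∀ T : ℕ, 1 ≤ T → ∀ v : EuclideanSpace ℝ (Fin d),
      (1 / (T : ℝ)) * ∑ t ∈ Finset.Icc 1 T, F (w t) ≤ ‖v‖ ^ 2 / (η * T) + 2 * F v := by
  intro T hT v
  set a : ℕ → ℝ := fun t => ‖w t - v‖ ^ 2 with ha
  -- per-step bound
  have hstep : ∀ t, 1 ≤ t → F (w t) ≤ 2 * F v + (a t - a (t + 1)) / η := by
    intro t ht
    set u := w t
    set gt := g u
    have hA : a (t + 1) = a t - 2 * η * ⟪gt, u - v⟫ + η ^ 2 * ‖gt‖ ^ 2 := by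
      simp only [ha, hupd t ht]
      have : u - η • gt - v = (u - v) - η • gt := by abel
      rw [this, norm_sub_sq_real, real_inner_smul_right, norm_smul]
      rw [real_inner_comm]
      simp [abs_of_nonneg hη.le]
      ring
    have hcvx : F u - F v ≤ ⟪gt, u - v⟫ := by
      have := grad_ineq hconv hgrad u v
      have h2 : ⟪gt, v - u⟫ = -⟪gt, u - v⟫ := by
        rw [← inner_neg_right]; congr 1; abel
      rw [h2] at this; linarith
    have hsq : ‖gt‖ ^ 2 ≤ 2 * β * F u := grad_sq_le hβ hnonneg hgrad hlip u
    have hηβ2 : η * (2 * β) ≤ 1 := by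
      rw [le_div_iff₀ (by positivity : (0:ℝ) < 2 * β)] at hηβ
      exact hηβ
    have hFu := hnonneg u
    have h5 : η ^ 2 * ‖gt‖ ^ 2 ≤ η ^ 2 * (2 * β * F u) :=
      mul_le_mul_of_nonneg_left hsq (sq_nonneg η)
    have h6 : η ^ 2 * (2 * β * F u) ≤ η * F u := by
      nlinarith [mul_nonneg hη.le hFu]
    have h7 : 2 * η * (F u - F v) ≤ 2 * η * ⟪gt, u - v⟫ :=
      mul_le_mul_of_nonneg_left hcvx (by positivity)
    have hmain : η * F u ≤ 2 * η * F v + (a t - a (t + 1)) := by nlinarith [hA]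
    have hXη : (a t - a (t + 1)) / η * η = a t - a (t + 1) := div_mul_cancel₀ _ hη.ne'
    nlinarith [hmain, hXη, hη]
  -- telescoping
  have htel : ∀ n : ℕ, ∑ t ∈ Finset.Icc 1 n, (a t - a (t + 1)) = a 1 - a (n + 1) := by
    intro n
    induction n with
    | zero => simp
    | succ m ih =>
      rw [Finset.sum_Icc_succ_top (Nat.le_add_left 1 m), ih]; ring
  have hsum : ∑ t ∈ Finset.Icc 1 T, F (w t) ≤ 2 * T * F v + (a 1 - a (T + 1)) / η := by
    calc ∑ t ∈ Finset.Icc 1 T, F (w t)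
        ≤ ∑ t ∈ Finset.Icc 1 T, (2 * F v + (a t - a (t + 1)) / η) :=
          Finset.sum_le_sum fun t ht => hstep t (Finset.mem_Icc.mp ht).1
      _ = 2 * T * F v + (∑ t ∈ Finset.Icc 1 T, (a t - a (t + 1))) / η := by
          rw [Finset.sum_add_distrib, ← Finset.sum_div, Finset.sum_const, Nat.card_Icc,
            Nat.add_sub_cancel, nsmul_eq_mul]
          ring
      _ = 2 * T * F v + (a 1 - a (T + 1)) / η := by rw [htel]
  have ha1 : a 1 = ‖v‖ ^ 2 := by simp [ha, hw1]
  have haT : 0 ≤ a (T + 1) := by positivity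
  have hsum2 : ∑ t ∈ Finset.Icc 1 T, F (w t) ≤ 2 * T * F v + ‖v‖ ^ 2 / η := by
    have : (a 1 - a (T + 1)) / η ≤ ‖v‖ ^ 2 / η :=
      (div_le_div_iff_of_pos_right hη).mpr (by linarith [ha1])
    linarith
  have hT0 : (0:ℝ) < T := by exact_mod_cast hT
  have hstepT : (1 / (T:ℝ)) * ∑ t ∈ Finset.Icc 1 T, F (w t)
      ≤ (1 / (T:ℝ)) * (2 * T * F v + ‖v‖ ^ 2 / η) :=
    mul_le_mul_of_nonneg_left hsum2 (by positivity)
  refine hstepT.trans (le_of_eq ?_)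
  field_simp
  ring
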